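/- Let L be a level datum such that L is empty, or the largest level of L is < 1, or the largest level of L is > 2 (i.e. L is a locally minimal level datum at infinity). Then B_L = 0 if and only if L = ∅. -/

import Mathlib

open Finset

/-- The ramification order of a level datum: the least common denominator of its
elements, i.e. the lcm of the denominators (`ram ∅ = 1`). -/
def ram (L : Finset ℚ) : ℕ := L.lcm Rat.den

/-- The least common denominator `d` of the "initial segment" of `L` consisting of the
elements `≥ k` (the elements come in decreasing order `k₀ > k₁ > ⋯`). -/
def segLcm (L : Finset ℚ) (k : ℚ) : ℕ := (L.filter (fun x => k ≤ x)).lcm Rat.den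

/-- A level datum: a finite set of positive rationals such that the least common
denominators `d₀, d₁, …` of the initial segments (for the decreasing order) are all `≥ 2`
and form a strictly increasing sequence.  (Since the `d_j` are increasing, requiring
`d_j ≥ 2` for all `j` is equivalent to `d₀ ≥ 2`, i.e. to the largest element not being
an integer.) -/
def IsLevelDatum (L : Finset ℚ) : Prop :=
  (∀ k ∈ L, 0 < k) ∧
  (∀ k ∈ L, 2 ≤ segLcm L k) ∧
  (∀ k ∈ L, ∀ k' ∈ L, k' < k → segLcm L k < segLcm L k')

/-- The largest level of `L` (junk value `0` for `L = ∅`). -/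
def maxLevel (L : Finset ℚ) : ℚ := WithBot.unbotD 0 L.max

/-- The numerator `s(k) := k · Ram(L) ∈ ℤ` of a level `k` of `L`. -/
def numer (L : Finset ℚ) (k : ℚ) : ℤ := (k * (ram L : ℚ)).num

/-- `σ := k₀ · Ram(L) ∈ ℤ`, the numerator of the largest level. -/
def sigma0 (L : Finset ℚ) : ℤ := numer L (maxLevel L)

/-- `gcd(s(x) for x ∈ s, Ram L)` : the gcd of `Ram L` together with the numerators of the
elements of a subset `s ⊆ L`. -/
def gSeg (L : Finset ℚ) (s : Finset ℚ) : ℕ :=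
  Nat.gcd (ram L) (s.gcd (fun x => (numer L x).natAbs))

/-- The quantity
`B_L = (r − (s₀,r))·s₀ + Σᵢ ((s₀,…,s_{i−1},r) − (s₀,…,s_i,r))·s_i − r² + 1`
(`B_∅ = 0`), equal to the dimension of the elementary wild character variety. -/
def B (L : Finset ℚ) : ℤ :=
  (∑ k ∈ L, ((gSeg L (L.filter (fun x => k < x)) : ℤ)
      - (gSeg L (L.filter (fun x => k ≤ x)) : ℤ)) * numer L k)
    - (ram L : ℤ) ^ 2 + 1

/-- A level datum is locally minimal at infinity if it is empty, or its largest level is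
`< 1` or `> 2`. -/
def LocallyMinimal (L : Finset ℚ) : Prop :=
  L = ∅ ∨ maxLevel L < 1 ∨ 2 < maxLevel L

/-- Rescaling of a level datum by a factor `c`, removing the integer elements. -/
def rescale (L : Finset ℚ) (c : ℚ) : Finset ℚ :=
  (L.image (fun k => c * k)).filter (fun x => x.den ≠ 1)

/-- The local simplification map `S_∞` on level data: if the largest level `k₀` satisfies
`1 < k₀ < 2`, rescale all the levels by `ρ/(σ−ρ)` (where `ρ = Ram L`, `σ = k₀·ρ`) and
remove the integer levels; otherwise do nothing. -/
def Sinf (L : Finset ℚ) : Finset ℚ :=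
  if 1 < maxLevel L ∧ maxLevel L < 2 then
    rescale L ((ram L : ℚ) / ((sigma0 L : ℚ) - (ram L : ℚ)))
  else L

lemma ram_pos (L : Finset ℚ) : 0 < ram L := by
  rw [Nat.pos_iff_ne_zero, Ne, ram, Finset.lcm_eq_zero_iff]
  rintro ⟨q, -, hq⟩
  exact q.den_nz hq

lemma numer_cast (L : Finset ℚ) {k : ℚ} (hk : k ∈ L) :
    ((numer L k : ℚ)) = k * (ram L : ℚ) := by
  obtain ⟨m, hm⟩ : (k.den : ℕ) ∣ ram L := Finset.dvd_lcm hk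
  have h : k * (ram L : ℚ) = ((k.num * m : ℤ) : ℚ) := by
    rw [hm]
    push_cast
    rw [← mul_assoc, Rat.mul_den_eq_num]
  rw [numer, h, Rat.num_intCast]

lemma numer_pos (L : Finset ℚ) {k : ℚ} (hk : k ∈ L) (h0 : 0 < k) :
    0 < numer L k := by
  have := numer_cast L hk
  have hr : (0:ℚ) < (ram L : ℚ) := by exact_mod_cast ram_pos L
  have : (0:ℚ) < ((numer L k : ℚ)) := by rw [this]; positivity
  exact_mod_cast this

lemma telescope (F : Finset ℚ → ℤ) (L : Finset ℚ) :
    ∑ k ∈ L, (F (L.filter (fun x => k < x)) - F (L.filter (fun x => k ≤ x)))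
      = F ∅ - F L := by
  induction L using Finset.induction_on_min with
  | empty => simp
  | insert a s ha ih =>
    have hans : a ∉ s := fun h => lt_irrefl a (ha a h)
    rw [Finset.sum_insert hans]
    have e1 : ∀ k ∈ s, (insert a s).filter (fun x => k < x) = s.filter (fun x => k < x) := by
      intro k hk
      rw [Finset.filter_insert, if_neg (by exact not_lt.2 (ha k hk).le)]
    have e2 : ∀ k ∈ s, (insert a s).filter (fun x => k ≤ x) = s.filter (fun x => k ≤ x) := by
      intro k hk
      rw [Finset.filter_insert, if_neg (by exact not_le.2 (ha k hk))]
    have e3 : (insert a s).filter (fun x => a < x) = s := by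
      rw [Finset.filter_insert, if_neg (lt_irrefl a), Finset.filter_true_of_mem ha]
    have e4 : (insert a s).filter (fun x => a ≤ x) = insert a s := by
      refine Finset.filter_true_of_mem ?_
      intro x hx
      rcases Finset.mem_insert.1 hx with h | h
      · exact h ▸ le_refl a
      · exact (ha x h).le
    rw [e3, e4, Finset.sum_congr rfl (fun k hk => by rw [e1 k hk, e2 k hk]), ih]
    ring

lemma gSeg_le (L : Finset ℚ) {s t : Finset ℚ} (hst : s ⊆ t) : gSeg L t ≤ gSeg L s := by
  have hdvd : gSeg L t ∣ gSeg L s := by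
    apply Nat.dvd_gcd (Nat.gcd_dvd_left _ _)
    refine dvd_trans (Nat.gcd_dvd_right _ _) ?_
    exact Finset.dvd_gcd fun b hb => Finset.gcd_dvd (hst hb)
  exact Nat.le_of_dvd (Nat.gcd_pos_of_pos_left _ (ram_pos L)) hdvd

/-- for a locally minimal level datum at infinity, `B_L = 0 ↔ L = ∅`. -/
theorem stmt_3 (L : Finset ℚ) (hL : IsLevelDatum L) (hmin : LocallyMinimal L) :
    B L = 0 ↔ L = ∅ := by
  constructor
  · intro hB
    by_contra hne
    have hLne : L.Nonempty := Finset.nonempty_iff_ne_empty.2 hne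
    set K := maxLevel L with hKdef
    have hKeq : K = L.max' hLne := by
      rw [hKdef, maxLevel, ← Finset.coe_max' hLne]; rfl
    have hK : K ∈ L := hKeq ▸ Finset.max'_mem L hLne
    have hKmax : ∀ x ∈ L, x ≤ K := fun x hx => hKeq ▸ Finset.le_max' L x hx
    set r : ℕ := ram L with hr
    have hrpos : 0 < r := ram_pos L
    -- filter facts at K
    have hfiltK_lt : L.filter (fun x => K < x) = ∅ :=
      Finset.filter_eq_empty_iff.2 fun {x} hx => not_lt.2 (hKmax x hx)
    have hfiltK_le : L.filter (fun x => K ≤ x) = {K} := by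
      ext x
      simp only [Finset.mem_filter, Finset.mem_singleton]
      constructor
      · rintro ⟨hx, h⟩; exact le_antisymm (hKmax x hx) h
      · rintro rfl; exact ⟨hK, le_refl _⟩
    have hden : 2 ≤ K.den := by
      have := hL.2.1 K hK
      rwa [segLcm, hfiltK_le, Finset.lcm_singleton, normalize_eq] at this
    have hdendvd : K.den ∣ r := Finset.dvd_lcm hK
    have hr2 : 2 ≤ r := le_trans hden (Nat.le_of_dvd hrpos hdendvd)
    -- coefficients are nonneg
    have hcoeff : ∀ k ∈ L, (0:ℤ) ≤ (gSeg L (L.filter (fun x => k < x)) : ℤ)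
        - (gSeg L (L.filter (fun x => k ≤ x)) : ℤ) := by
      intro k hk
      have h := gSeg_le L (L.monotone_filter_right
        (fun x _ (hx : k < x) => le_of_lt hx))
      simp only [sub_nonneg, Nat.cast_le]
      exact h
    have hnum : ∀ k ∈ L, 0 < numer L k := fun k hk => numer_pos L hk (hL.1 k hk)
    rcases hmin with h | h | h
    · exact hne h
    · -- case maxLevel < 1 : show B L < 0
      have hterm : ∀ k ∈ L, ((gSeg L (L.filter (fun x => k < x)) : ℤ)
          - (gSeg L (L.filter (fun x => k ≤ x)) : ℤ)) * numer L k
          ≤ ((gSeg L (L.filter (fun x => k < x)) : ℤ)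
          - (gSeg L (L.filter (fun x => k ≤ x)) : ℤ)) * ((r : ℤ) - 1) := by
        intro k hk
        have hlt : numer L k ≤ (r:ℤ) - 1 := by
          have hc := numer_cast L hk
          have hk1 : k < 1 := lt_of_le_of_lt (hKmax k hk) h
          have : ((numer L k : ℚ)) < (r : ℚ) := by
            rw [hc]
            have hrq : (0:ℚ) < (r:ℚ) := by exact_mod_cast hrpos
            nlinarith
          have : numer L k < (r:ℤ) := by exact_mod_cast this
          omega
        exact mul_le_mul_of_nonneg_left hlt (hcoeff k hk)
      have hsum : (∑ k ∈ L, ((gSeg L (L.filter (fun x => k < x)) : ℤ)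
          - (gSeg L (L.filter (fun x => k ≤ x)) : ℤ)) * numer L k)
          ≤ ((r:ℤ) - gSeg L L) * ((r:ℤ) - 1) := by
        calc _ ≤ ∑ k ∈ L, ((gSeg L (L.filter (fun x => k < x)) : ℤ)
              - (gSeg L (L.filter (fun x => k ≤ x)) : ℤ)) * ((r:ℤ) - 1) :=
            Finset.sum_le_sum hterm
          _ = (∑ k ∈ L, ((gSeg L (L.filter (fun x => k < x)) : ℤ)
              - (gSeg L (L.filter (fun x => k ≤ x)) : ℤ))) * ((r:ℤ) - 1) := by
            rw [Finset.sum_mul]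
          _ = ((gSeg L ∅ : ℤ) - gSeg L L) * ((r:ℤ) - 1) := by
            rw [telescope (fun s => (gSeg L s : ℤ)) L]
          _ = ((r:ℤ) - gSeg L L) * ((r:ℤ) - 1) := by
            have : gSeg L ∅ = r := by
              simp [gSeg, Nat.gcd_zero_right, hr]
            rw [this]
      have hg1 : 1 ≤ (gSeg L L : ℤ) := by
        have : 0 < gSeg L L := Nat.gcd_pos_of_pos_left _ hrpos
        exact_mod_cast this
      have hr2' : (2:ℤ) ≤ (r:ℤ) := by exact_mod_cast hr2
      have hBlt : B L < 0 := by
        rw [B]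
        nlinarith [hsum, hg1, hr2']
      omega
    · -- case 2 < maxLevel : show B L > 0
      have hsum_ge : (∑ k ∈ L, ((gSeg L (L.filter (fun x => k < x)) : ℤ)
          - (gSeg L (L.filter (fun x => k ≤ x)) : ℤ)) * numer L k)
          ≥ ((gSeg L (L.filter (fun x => K < x)) : ℤ)
          - (gSeg L (L.filter (fun x => K ≤ x)) : ℤ)) * numer L K := by
        apply Finset.single_le_sum (f := fun k => ((gSeg L (L.filter (fun x => k < x)) : ℤ)
          - (gSeg L (L.filter (fun x => k ≤ x)) : ℤ)) * numer L k) ?_ hK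
        intro k hk
        exact mul_nonneg (hcoeff k hk) (hnum k hk).le
      set g0 : ℕ := gSeg L (L.filter (fun x => K ≤ x)) with hg0
      have hgempty : (gSeg L (L.filter (fun x => K < x)) : ℤ) = (r : ℤ) := by
        rw [hfiltK_lt]
        simp [gSeg, Nat.gcd_zero_right, hr]
      have hg0dvd : g0 ∣ r := by
        rw [hg0]
        exact Nat.gcd_dvd_left _ _
      have hg0ne : g0 ≠ r := by
        intro hgr
        have hrd : (r:ℤ) ∣ numer L K := by
          have h1 : g0 ∣ (numer L K).natAbs := by
            rw [hg0, hfiltK_le]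
            simp only [gSeg, Finset.gcd_singleton, normalize_eq]
            exact Nat.gcd_dvd_right _ _
          rw [hgr] at h1
          exact Int.natCast_dvd_natCast.2 h1 |>.trans (Int.natAbs_dvd.2 dvd_rfl)
        obtain ⟨c, hc⟩ := hrd
        have hKc : K = (c : ℚ) := by
          have hcast := numer_cast L hK
          rw [hc] at hcast
          have hrq : ((r:ℚ)) ≠ 0 := by
            have : (0:ℚ) < (r:ℚ) := by exact_mod_cast hrpos
            exact ne_of_gt this
          have h2 : (c:ℚ) * (r:ℚ) = K * (r:ℚ) := by rw [← hcast]; push_cast; ring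
          exact (mul_right_cancel₀ hrq h2).symm
        have : K.den = 1 := by rw [hKc]; exact Rat.den_intCast c
        omega
      have hg0lt : g0 < r := lt_of_le_of_ne (Nat.le_of_dvd hrpos hg0dvd) hg0ne
      have h2g0 : 2 * g0 ≤ r := by
        obtain ⟨c, hc⟩ := hg0dvd
        rcases Nat.lt_or_ge c 2 with hc2 | hc2
        · interval_cases c <;> omega
        · have : 0 < g0 := Nat.gcd_pos_of_pos_left _ hrpos
          calc 2 * g0 ≤ c * g0 := Nat.mul_le_mul_right _ hc2
            _ = r := by rw [hc]; ring
      have hs0 : 2 * (r:ℤ) + 1 ≤ numer L K := by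
        have hc := numer_cast L hK
        have : (2 * (r:ℚ)) < ((numer L K : ℚ)) := by
          rw [hc]
          have hrq : (0:ℚ) < (r:ℚ) := by exact_mod_cast hrpos
          nlinarith
        have : 2 * (r:ℤ) < numer L K := by exact_mod_cast this
        omega
      have h2g0' : 2 * (g0:ℤ) ≤ (r:ℤ) := by exact_mod_cast h2g0
      have hr2' : (2:ℤ) ≤ (r:ℤ) := by exact_mod_cast hr2
      have hBpos : 0 < B L := by
        rw [B]
        have key : ((r:ℤ) - g0) * (2 * (r:ℤ) + 1) ≤ ((r:ℤ) - g0) * numer L K := by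
          apply mul_le_mul_of_nonneg_left hs0
          omega
        rw [hgempty] at hsum_ge
        nlinarith [hsum_ge, key, h2g0', hr2']
      omega
  · rintro rfl
    simp [B, ram]
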